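/- Let I ⊆ ℝ be an open interval, b, c, f₃ : ℝ → ℝ with c(x) ≠ 0 on I, let K be differentiable on I with K'(x) = f₃(x)/(2c(x)), and define a(x) = (1/4)·[ f₃(x)/c(x) − 2b(x)K(x) − c(x)K(x)² ]. Let B be differentiable on I with B'(x) = b(x) + c(x)K(x), and G differentiable on I with G'(x) = c(x)·exp(B(x)). Then for every constant C₈ ∈ ℝ, the function y(x) = K(x)/2 + exp(B(x))/(C₈ − G(x)) satisfies y'(x) = a(x) + b(x)y(x) + c(x)y(x)² at every x ∈ I with C₈ − G(x) ≠ 0. -/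

import Mathlib

/-- Theorem 5 (Case 5): with `K' = f₃/(2c)`,
`a = (1/4)[f₃/c − 2bK − cK²]`, `B' = b + cK` and `G' = c · exp B`, the
function `y = K/2 + exp B / (C₈ − G)` solves the Riccati equation wherever
`C₈ − G ≠ 0`. -/
theorem riccati_case5_general
    (p q : ℝ) (a b c f₃ K B G : ℝ → ℝ)
    (hc : ∀ x ∈ Set.Ioo p q, c x ≠ 0)
    (hK : ∀ x ∈ Set.Ioo p q, HasDerivAt K (f₃ x / (2 * c x)) x)
    (ha : ∀ x ∈ Set.Ioo p q,
      a x = (1 / 4) * (f₃ x / c x - 2 * b x * K x - c x * K x ^ 2))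
    (hB : ∀ x ∈ Set.Ioo p q, HasDerivAt B (b x + c x * K x) x)
    (hG : ∀ x ∈ Set.Ioo p q, HasDerivAt G (c x * Real.exp (B x)) x)
    (C₈ : ℝ) :
    ∀ x ∈ Set.Ioo p q, C₈ - G x ≠ 0 →
      HasDerivAt (fun t => K t / 2 + Real.exp (B t) / (C₈ - G t))
        (a x + b x * (K x / 2 + Real.exp (B x) / (C₈ - G x))
          + c x * (K x / 2 + Real.exp (B x) / (C₈ - G x)) ^ 2) x := by
  intro x hx hden
  have hcx := hc x hx
  have hKx := hK x hx
  have hBx := hB x hx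
  have hGx := hG x hx
  have hnum : HasDerivAt (fun t => Real.exp (B t))
      (Real.exp (B x) * (b x + c x * K x)) x := by
    simpa [mul_comm, Function.comp_def] using (Real.hasDerivAt_exp (B x)).comp x hBx
  have hd : HasDerivAt (fun t => C₈ - G t) (-(c x * Real.exp (B x))) x :=
    by simpa [Pi.sub_def] using (hasDerivAt_const x C₈).sub hGx
  have hq : HasDerivAt (fun t => Real.exp (B t) / (C₈ - G t))
      ((Real.exp (B x) * (b x + c x * K x) * (C₈ - G x)
        - Real.exp (B x) * (-(c x * Real.exp (B x)))) / (C₈ - G x) ^ 2) x :=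
    hnum.div hd hden
  have h : HasDerivAt (fun t => K t / 2 + Real.exp (B t) / (C₈ - G t)) _ x := ((hKx.div_const 2).add hq)
  convert h using 1
  rw [ha x hx]
  field_simp
  ring
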